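/- arXiv:0711.2503 — 2 statements merged into one kernel-verified Lean document; each statement's English description precedes it below -/
import Mathlib

section
/- Let n ≥ 5 be prime and let g = g^A be the Alltop window with entries g^A_q = n^{-1/2} e^{2πi q³/n}, q = 0,…,n−1. If S ∈ ℕ satisfies S < (√n + 1)/2, then for every S-sparse vector x ∈ ℂ^{n²}, Basis Pursuit recovers x from y = Ψ_{g^A} x, i.e. x is the unique minimizer of ‖z‖₁ over all z with Ψ_{g^A} z = y. -/
open MeasureTheory Complex Matrix

noncomputable section

/-- The time-frequency shift `π(λ) = M_ℓ T_k` applied to a window `g ∈ ℂ^n`: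
`(π(k,ℓ)g)_q = e^{2πiℓq/n} g_{(k+q) mod n}`. -/
def tfShift (n : ℕ) (lam : Fin n × Fin n) (g : Fin n → ℂ) : Fin n → ℂ :=
  fun q => Complex.exp (2 * Real.pi * Complex.I * (lam.2 : ℕ) * (q : ℕ) / n) * g (lam.1 + q)

/-- The time-frequency shift `π(λ) = M_ℓ T_k` as an `n × n` matrix. -/
def tfMatrix (n : ℕ) (lam : Fin n × Fin n) : Matrix (Fin n) (Fin n) ℂ :=
  Matrix.of fun q p =>
    if p = lam.1 + q then Complex.exp (2 * Real.pi * Complex.I * (lam.2 : ℕ) * (q : ℕ) / n) else 0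

/-- The Gabor synthesis matrix `Ψ_g ∈ ℂ^{n × n²}`, columns `π(λ)g`. -/
def gaborMatrix (n : ℕ) (g : Fin n → ℂ) : Matrix (Fin n) (Fin n × Fin n) ℂ :=
  Matrix.of fun q lam => tfShift n lam g q

/-- The column submatrix of a matrix, columns restricted to a finite index set `Λ`. -/
def colSub {ι κ : Type*} (A : Matrix ι κ ℂ) (Λ : Finset κ) : Matrix ι ↥Λ ℂ :=
  Matrix.of fun i j => A i (j : κ)

/-- The column submatrix `Ψ_Λ` of the Gabor synthesis matrix. -/
def gaborSub (n : ℕ) (g : Fin n → ℂ) (Λ : Finset (Fin n × Fin n)) : Matrix (Fin n) ↥Λ ℂ :=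
  colSub (gaborMatrix n g) Λ

/-- The ℓ¹ norm of a vector in `ℂ^ι`. -/
def l1norm {ι : Type*} [Fintype ι] (z : ι → ℂ) : ℝ := ∑ i, ‖z i‖

/-- The ℓ² (Euclidean) norm of a vector in `ℂ^ι`. -/
def l2norm {ι : Type*} [Fintype ι] (z : ι → ℂ) : ℝ := Real.sqrt (∑ i, ‖z i‖ ^ 2)

/-- The standard Hermitian inner product `⟨u,v⟩ = ∑ u_i conj(v_i)` on `ℂ^ι`. -/
def dotc {ι : Type*} [Fintype ι] (u v : ι → ℂ) : ℂ := ∑ i, u i * (starRingEnd ℂ) (v i)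

/-- `x` is the unique minimizer of the ℓ¹ norm among all `z` with `A z = A x`
(Basis Pursuit recovers `x` from `y = A x`). -/
def BPrecovers {ι κ : Type*} [Fintype ι] [Fintype κ] (A : Matrix ι κ ℂ) (x : κ → ℂ) : Prop :=
  ∀ z : κ → ℂ, A.mulVec z = A.mulVec x → z ≠ x → l1norm x < l1norm z

/-- The spectral norm (`ℓ² → ℓ²` operator norm) of a complex matrix. -/
def specNorm {ι κ : Type*} [Fintype ι] [Fintype κ] [DecidableEq κ] (A : Matrix ι κ ℂ) : ℝ :=
  ‖LinearMap.toContinuousLinearMap (Matrix.toEuclideanLin A)‖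

/-- The Frobenius norm of a complex matrix. -/
def frobNorm {ι κ : Type*} [Fintype ι] [Fintype κ] (A : Matrix ι κ ℂ) : ℝ :=
  Real.sqrt (∑ i, ∑ j, ‖A i j‖ ^ 2)

/-- The complex sign: `sgn(z) = z/|z|` for `z ≠ 0`, and `sgn(0) = 0`. -/
def csgn (z : ℂ) : ℂ := if z = 0 then 0 else z / ‖z‖

/-- The associated Stirling number of the first kind `d₂(m,s)`: the number of permutations
of an `m`-element set consisting of exactly `s` disjoint cycles, each of length at least 2
(equivalently, fixed-point-free permutations of `Fin m` with exactly `s` cycles). -/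
def d2 (m s : ℕ) : ℕ :=
  Fintype.card {σ : Equiv.Perm (Fin m) // σ.cycleType.card = s ∧ σ.cycleType.sum = m}

instance : MeasurableSpace Circle := borel Circle
instance : BorelSpace Circle := ⟨rfl⟩

/-- The normalized Haar (uniform) probability measure on the circle group
`{z ∈ ℂ : |z| = 1}`. -/
def circleHaar : Measure Circle :=
  Measure.haarMeasure (⊤ : TopologicalSpace.PositiveCompacts Circle)

instance : IsProbabilityMeasure circleHaar :=
  ⟨by simpa [circleHaar] using Measure.haarMeasure_self (K₀ := (⊤ : TopologicalSpace.PositiveCompacts Circle))⟩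

/-- The random unimodular window `g^R_q = ε_q/√n` determined by the phases `ε : Fin n → Circle`. -/
def windowR (n : ℕ) (ε : Fin n → Circle) : Fin n → ℂ :=
  fun q => (ε q : ℂ) / Real.sqrt n

/-- The distribution of `n` independent Haar-uniform points on the circle
(the law of the random phases `ε_0, …, ε_{n-1}`). -/
def Pmeas (n : ℕ) : Measure (Fin n → Circle) := Measure.pi fun _ => circleHaar

/-- The extension-by-zero matrix `E_Λ : ℂ^Λ → ℂ^κ`. -/
def extMat {κ : Type*} [DecidableEq κ] (Λ : Finset κ) : Matrix κ ↥Λ ℂ :=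
  Matrix.of fun j lam => if j = (lam : κ) then 1 else 0

/-- Pad a matrix with columns indexed by `Λ` to one with columns indexed by all of `κ`,
filling with zero columns: the matrix `K R_Λ` where `R_Λ` is the restriction operator. -/
def padCols {ι κ : Type*} [DecidableEq κ] {Λ : Finset κ} (K : Matrix ι ↥Λ ℂ) : Matrix ι κ ℂ :=
  Matrix.of fun i j => if h : j ∈ Λ then K i ⟨j, h⟩ else 0

end


noncomputable section
namespace AlltopAux
set_option linter.unusedSectionVars false
set_option linter.unusedVariables false
variable (n : ℕ) [NeZero n]

/-- `e(m) = exp(2πi m/n)` for natural `m`. -/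
def ec (m : ℕ) : ℂ := Complex.exp (2 * Real.pi * Complex.I * m / n)

variable [NeZero n]

/-- `e(a) = exp(2πi a/n)` for `a : ZMod n`. -/
def ez (a : ZMod n) : ℂ := ec n a.val

lemma ec_add (m m' : ℕ) : ec n (m + m') = ec n m * ec n m' := by
  unfold ec; rw [← Complex.exp_add]; congr 1; push_cast; ring

lemma ec_eq_ez (m : ℕ) : ec n m = ez n (m : ZMod n) := by
  have hn : (n:ℂ) ≠ 0 := Nat.cast_ne_zero.mpr (NeZero.ne n)
  unfold ez ec
  rw [ZMod.val_natCast]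
  conv_lhs => rw [show m = m % n + n * (m / n) from (Nat.mod_add_div m n).symm]
  rw [show (2 * (Real.pi:ℂ) * Complex.I * (↑(m % n + n * (m / n))) / ↑n)
      = 2 * (Real.pi:ℂ) * Complex.I * (↑(m % n)) / ↑n + ((m/n : ℕ) : ℂ) * (2 * (Real.pi:ℂ) * Complex.I) by
        push_cast; field_simp]
  rw [Complex.exp_add]
  have h1 : Complex.exp (((m/n : ℕ) : ℂ) * (2 * (Real.pi:ℂ) * Complex.I)) = 1 := by
    rw [show ((m/n : ℕ) : ℂ) = (((m/n : ℕ) : ℤ) : ℂ) by push_cast; rfl]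
    exact Complex.exp_int_mul_two_pi_mul_I _
  rw [h1, mul_one]

lemma natCast_val_eq (a : ZMod n) : ((a.val : ℕ) : ZMod n) = a := by
  simp [ZMod.natCast_val, ZMod.cast_id]

lemma ez_add (a b : ZMod n) : ez n (a + b) = ez n a * ez n b := by
  have : ((a.val + b.val : ℕ) : ZMod n) = a + b := by
    push_cast [natCast_val_eq]; ring
  calc ez n (a+b) = ec n (a.val + b.val) := by rw [ec_eq_ez, this]
  _ = ec n a.val * ec n b.val := ec_add n _ _

lemma ez_zero : ez n 0 = 1 := by
  unfold ez ec; simp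

lemma ez_ne_zero (a : ZMod n) : ez n a ≠ 0 := Complex.exp_ne_zero _

lemma conj_ez (a : ZMod n) : (starRingEnd ℂ) (ez n a) = ez n (-a) := by
  have h1 : ez n (-a) * ez n a = 1 := by rw [← ez_add]; simp [ez_zero]
  have h2 : (starRingEnd ℂ) (ez n a) * ez n a = 1 := by
    unfold ez ec
    rw [← Complex.exp_conj, ← Complex.exp_add]
    rw [show (starRingEnd ℂ) (2 * (Real.pi:ℂ) * Complex.I * (a.val:ℂ) / n)
        = -(2 * (Real.pi:ℂ) * Complex.I * (a.val:ℂ) / n) by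
      simp only [map_div₀, _root_.map_mul, map_ofNat, Complex.conj_I, Complex.conj_natCast,
        Complex.conj_ofReal]; ring]
    simp
  have := h1.trans h2.symm
  exact (mul_right_cancel₀ (ez_ne_zero n a) this).symm

lemma abs_ez (a : ZMod n) : ‖ez n a‖ = 1 := by
  unfold ez ec
  rw [show (2 * (Real.pi:ℂ) * Complex.I * (a.val:ℂ) / n) = ((2 * Real.pi * a.val / n : ℝ) : ℂ) * Complex.I by
    push_cast; ring]
  exact Complex.norm_exp_ofReal_mul_I _

lemma sum_zmod_eq_sum_range (F : ZMod n → ℂ) :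
    ∑ a : ZMod n, F a = ∑ m ∈ Finset.range n, F (m : ZMod n) := by
  refine Finset.sum_nbij' (fun a => a.val) (fun m => (m : ZMod n)) ?_ ?_ ?_ ?_ ?_
  · intro a _; exact Finset.mem_range.mpr (ZMod.val_lt a)
  · intro m _; exact Finset.mem_univ _
  · intro a _; exact natCast_val_eq n a
  · intro m hm; exact ZMod.val_cast_of_lt (Finset.mem_range.mp hm)
  · intro a _; rw [natCast_val_eq]

lemma sum_ez_eq_zero (hn1 : 1 < n) : ∑ a : ZMod n, ez n a = 0 := by
  rw [sum_zmod_eq_sum_range]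
  have hζ : IsPrimitiveRoot (Complex.exp (2 * Real.pi * Complex.I / n)) n :=
    Complex.isPrimitiveRoot_exp n (NeZero.ne n)
  have : ∀ m ∈ Finset.range n, ez n ((m:ZMod n)) = (Complex.exp (2 * Real.pi * Complex.I / n))^m := by
    intro m hm
    rw [← ec_eq_ez, ← Complex.exp_nat_mul]
    unfold ec; congr 1; ring
  rw [Finset.sum_congr rfl this]
  exact hζ.geom_sum_eq_zero hn1


lemma natCast_ne_zero_of_prime (hp : n.Prime) (m : ℕ) (hm : 0 < m) (hmn : m < n) :
    ((m : ℕ) : ZMod n) ≠ 0 := by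
  intro h
  have := congrArg ZMod.val h
  rw [ZMod.val_cast_of_lt hmn, ZMod.val_zero] at this
  omega

lemma sum_ez_mul_eq_zero (hp : n.Prime) {c : ZMod n} (hc : c ≠ 0) :
    ∑ a : ZMod n, ez n (c * a) = 0 := by
  haveI : Fact n.Prime := ⟨hp⟩
  have h1 : ∑ a : ZMod n, ez n (c * a) = ∑ a : ZMod n, ez n a := by
    exact Fintype.sum_equiv (Equiv.mulLeft₀ c hc) _ _ (fun a => rfl)
  rw [h1]
  exact sum_ez_eq_zero n hp.one_lt

/-- The key Gauss-sum magnitude: for `α ≠ 0`, `|∑ e(αa²+βa+γ)|² = n`. -/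
lemma quad_sum_mul_conj (hp : n.Prime) (hn5 : 5 ≤ n) (α β γ : ZMod n) (hα : α ≠ 0) :
    (∑ a : ZMod n, ez n (α*a^2 + β*a + γ)) *
      (starRingEnd ℂ) (∑ a : ZMod n, ez n (α*a^2 + β*a + γ)) = n := by
  haveI : Fact n.Prime := ⟨hp⟩
  have h2 : ((2:ℕ) : ZMod n) ≠ 0 := natCast_ne_zero_of_prime n hp 2 (by omega) (by omega)
  rw [map_sum]
  rw [Finset.sum_mul_sum]
  have hterm : ∀ a b : ZMod n, ez n (α*a^2+β*a+γ) * (starRingEnd ℂ) (ez n (α*b^2+β*b+γ))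
      = ez n ((α*a^2+β*a+γ) - (α*b^2+β*b+γ)) := by
    intro a b
    rw [conj_ez, ← ez_add]
    congr 1; ring
  simp only [hterm]
  rw [Finset.sum_comm]
  have hinner : ∀ b : ZMod n,
      (∑ a : ZMod n, ez n ((α*a^2+β*a+γ) - (α*b^2+β*b+γ)))
      = ∑ d : ZMod n, ez n ((2*α*d)*b + (α*d^2+β*d)) := by
    intro b
    refine (Fintype.sum_equiv (Equiv.addLeft b) _ _ (fun d => ?_)).symm
    congr 1
    show (2*α*d)*b + (α*d^2+β*d) = (α*(b+d)^2+β*(b+d)+γ) - (α*b^2+β*b+γ)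
    ring
  simp only [hinner]
  rw [Finset.sum_comm]
  have hout : ∀ d : ZMod n,
      (∑ b : ZMod n, ez n ((2*α*d)*b + (α*d^2+β*d)))
      = if d = 0 then (n : ℂ) else 0 := by
    intro d
    by_cases hd : d = 0
    · simp [hd, ez_zero]
    · rw [if_neg hd]
      have hc : 2*α*d ≠ 0 := by
        apply mul_ne_zero (mul_ne_zero ?_ hα) hd
        simpa using h2
      calc ∑ b : ZMod n, ez n ((2*α*d)*b + (α*d^2+β*d))
          = (∑ b : ZMod n, ez n ((2*α*d)*b)) * ez n (α*d^2+β*d) := by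
            rw [Finset.sum_mul]; exact Finset.sum_congr rfl fun b _ => by rw [ez_add]
        _ = 0 := by rw [sum_ez_mul_eq_zero n hp hc, zero_mul]
  simp only [hout]
  simp


/-- shorthand: cast `Fin n → ZMod n`. -/
def fz (t : Fin n) : ZMod n := ((t : ℕ) : ZMod n)

lemma fz_injective : Function.Injective (fz n) := by
  intro a b h
  have := congrArg ZMod.val h
  unfold fz at this
  rw [ZMod.val_cast_of_lt a.isLt, ZMod.val_cast_of_lt b.isLt] at this
  exact Fin.ext this

lemma fz_add (k q : Fin n) : fz n (k + q) = fz n k + fz n q := by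
  unfold fz
  rw [Fin.val_add, ZMod.natCast_mod]
  push_cast; ring

lemma sum_fin_zmod (F : ZMod n → ℂ) : ∑ q : Fin n, F (fz n q) = ∑ a : ZMod n, F a := by
  rw [sum_zmod_eq_sum_range]
  exact Fin.sum_univ_eq_sum_range (fun m => F (m : ZMod n)) n

lemma gram_eq (hn : 0 < n) (gA : Fin n → ℂ)
    (hgA : ∀ q : Fin n, gA q = Complex.exp (2 * Real.pi * Complex.I * (q : ℕ) ^ 3 / n) / Real.sqrt n)
    (lam mu : Fin n × Fin n) :
    dotc (fun q => gaborMatrix n gA q lam) (fun q => gaborMatrix n gA q mu)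
    = (∑ a : ZMod n, ez n (fz n lam.2 * a - fz n mu.2 * a
        + (fz n lam.1 + a)^3 - (fz n mu.1 + a)^3)) / n := by
  have hexp : ∀ l q : Fin n, Complex.exp (2 * Real.pi * Complex.I * ((l:ℕ):ℂ) * ((q:ℕ):ℂ) / n)
      = ez n (fz n l * fz n q) := by
    intro l q
    have h1 : (2 * (Real.pi:ℂ) * Complex.I * ((l:ℕ):ℂ) * ((q:ℕ):ℂ) / n)
        = 2 * (Real.pi:ℂ) * Complex.I * ((((l:ℕ)*(q:ℕ) : ℕ)):ℂ) / n := by push_cast; ring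
    rw [h1]
    rw [show Complex.exp (2 * (Real.pi:ℂ) * Complex.I * ((((l:ℕ)*(q:ℕ) : ℕ)):ℂ) / n)
        = ec n ((l:ℕ)*(q:ℕ)) from rfl, ec_eq_ez]
    unfold fz; push_cast; ring_nf
  have hg' : ∀ t : Fin n, gA t = ez n ((fz n t)^3) / ((Real.sqrt n : ℝ) : ℂ) := by
    intro t
    rw [hgA t]
    congr 1
    have h1 : (2 * (Real.pi:ℂ) * Complex.I * ((t:ℕ):ℂ)^3 / n)
        = 2 * (Real.pi:ℂ) * Complex.I * ((((t:ℕ)^3 : ℕ)):ℂ) / n := by push_cast; ring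
    rw [h1]
    rw [show Complex.exp (2 * (Real.pi:ℂ) * Complex.I * ((((t:ℕ)^3 : ℕ)):ℂ) / n)
        = ec n ((t:ℕ)^3) from rfl, ec_eq_ez]
    unfold fz; push_cast; ring_nf
  have hsqrt : ((Real.sqrt n : ℝ) : ℂ) * ((Real.sqrt n : ℝ) : ℂ) = (n : ℂ) := by
    rw [← Complex.ofReal_mul, Real.mul_self_sqrt (Nat.cast_nonneg n)]
    push_cast; rfl
  have hterm : ∀ q : Fin n,
      (fun q => gaborMatrix n gA q lam) q * (starRingEnd ℂ) ((fun q => gaborMatrix n gA q mu) q)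
      = ez n (fz n lam.2 * fz n q - fz n mu.2 * fz n q
          + (fz n lam.1 + fz n q)^3 - (fz n mu.1 + fz n q)^3) / n := by
    intro q
    show (Complex.exp (2 * Real.pi * Complex.I * (lam.2 : ℕ) * (q : ℕ) / n) * gA (lam.1 + q))
      * (starRingEnd ℂ) (Complex.exp (2 * Real.pi * Complex.I * (mu.2 : ℕ) * (q : ℕ) / n) * gA (mu.1 + q)) = _
    rw [hexp, hexp, hg', hg', fz_add, fz_add]
    rw [_root_.map_mul, map_div₀, conj_ez, conj_ez, Complex.conj_ofReal]
    rw [show ez n (fz n lam.2 * fz n q) * (ez n ((fz n lam.1 + fz n q) ^ 3) / ((Real.sqrt n:ℝ):ℂ)) *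
      (ez n (-(fz n mu.2 * fz n q)) * (ez n (-((fz n mu.1 + fz n q) ^ 3)) / ((Real.sqrt n:ℝ):ℂ)))
      = (ez n (fz n lam.2 * fz n q) * ez n ((fz n lam.1 + fz n q) ^ 3) *
        (ez n (-(fz n mu.2 * fz n q)) * ez n (-((fz n mu.1 + fz n q) ^ 3))))
        / (((Real.sqrt n:ℝ):ℂ) * ((Real.sqrt n:ℝ):ℂ)) from by ring]
    rw [hsqrt]
    congr 1
    rw [← ez_add, ← ez_add, ← ez_add]
    congr 1
    ring
  unfold dotc
  rw [Finset.sum_congr rfl (fun q _ => hterm q)]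
  rw [← Finset.sum_div]
  congr 1
  exact sum_fin_zmod n (fun a => ez n (fz n lam.2 * a - fz n mu.2 * a
        + (fz n lam.1 + a)^3 - (fz n mu.1 + a)^3))


lemma coh_diag (hp : n.Prime) (gA : Fin n → ℂ)
    (hgA : ∀ q : Fin n, gA q = Complex.exp (2 * Real.pi * Complex.I * (q : ℕ) ^ 3 / n) / Real.sqrt n)
    (lam : Fin n × Fin n) :
    dotc (fun q => gaborMatrix n gA q lam) (fun q => gaborMatrix n gA q lam) = 1 := by
  rw [gram_eq n hp.pos gA hgA lam lam]
  have : ∀ a : ZMod n, ez n (fz n lam.2 * a - fz n lam.2 * a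
      + (fz n lam.1 + a)^3 - (fz n lam.1 + a)^3) = 1 := by
    intro a
    rw [show fz n lam.2 * a - fz n lam.2 * a + (fz n lam.1 + a)^3 - (fz n lam.1 + a)^3 = 0 by ring]
    exact ez_zero n
  rw [Finset.sum_congr rfl (fun a _ => this a)]
  have hcard : (Finset.univ : Finset (ZMod n)).card = n := by
    simp [ZMod.card]
  rw [Finset.sum_const, hcard, nsmul_eq_mul, mul_one, div_self]
  exact Nat.cast_ne_zero.mpr hp.pos.ne'

lemma coh_off (hp : n.Prime) (hn5 : 5 ≤ n) (gA : Fin n → ℂ)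
    (hgA : ∀ q : Fin n, gA q = Complex.exp (2 * Real.pi * Complex.I * (q : ℕ) ^ 3 / n) / Real.sqrt n)
    {lam mu : Fin n × Fin n} (hne : lam ≠ mu) :
    ‖dotc (fun q => gaborMatrix n gA q lam) (fun q => gaborMatrix n gA q mu)‖
      ≤ 1 / Real.sqrt n := by
  haveI : Fact n.Prime := ⟨hp⟩
  have hn0 : (0:ℝ) < n := by exact_mod_cast hp.pos
  have hsq : (0:ℝ) < Real.sqrt n := Real.sqrt_pos.mpr hn0
  rw [gram_eq n hp.pos gA hgA lam mu]
  by_cases hk : lam.1 = mu.1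
  · -- same translation, different modulation
    have hl : lam.2 ≠ mu.2 := by
      intro hl; exact hne (Prod.ext hk hl)
    have hc : fz n lam.2 - fz n mu.2 ≠ 0 := by
      intro h
      exact hl (fz_injective n (sub_eq_zero.mp h))
    have : ∀ a : ZMod n, ez n (fz n lam.2 * a - fz n mu.2 * a
        + (fz n lam.1 + a)^3 - (fz n mu.1 + a)^3) = ez n ((fz n lam.2 - fz n mu.2) * a) := by
      intro a; congr 1; rw [hk]; ring
    rw [Finset.sum_congr rfl (fun a _ => this a), sum_ez_mul_eq_zero n hp hc]
    simp only [zero_div, norm_zero]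
    positivity
  · -- different translation: Gauss sum case
    have hK : fz n lam.1 - fz n mu.1 ≠ 0 := by
      intro h
      exact hk (fz_injective n (sub_eq_zero.mp h))
    have h3 : ((3:ℕ) : ZMod n) ≠ 0 := natCast_ne_zero_of_prime n hp 3 (by omega) (by omega)
    set α : ZMod n := 3 * (fz n lam.1 - fz n mu.1) with hα
    set β : ZMod n := (fz n lam.2 - fz n mu.2) + 3 * ((fz n lam.1)^2 - (fz n mu.1)^2) with hβ
    set γ : ZMod n := (fz n lam.1)^3 - (fz n mu.1)^3 with hγ
    have hα0 : α ≠ 0 := by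
      rw [hα]
      refine mul_ne_zero ?_ hK
      simpa using h3
    have hform : ∀ a : ZMod n, ez n (fz n lam.2 * a - fz n mu.2 * a
        + (fz n lam.1 + a)^3 - (fz n mu.1 + a)^3) = ez n (α*a^2 + β*a + γ) := by
      intro a; congr 1; rw [hα, hβ, hγ]; ring
    rw [Finset.sum_congr rfl (fun a _ => hform a)]
    set Ssum : ℂ := ∑ a : ZMod n, ez n (α*a^2 + β*a + γ) with hSsum
    have hmul := quad_sum_mul_conj n hp hn5 α β γ hα0
    have habs2 : (‖Ssum‖)^2 = n := by
      have h1 : Ssum * (starRingEnd ℂ) Ssum = (Complex.normSq Ssum : ℂ) := Complex.mul_conj Ssum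
      rw [← hSsum] at hmul
      rw [h1] at hmul
      have h2 : Complex.normSq Ssum = (n:ℝ) := by exact_mod_cast hmul
      rw [Complex.sq_norm, h2]
    have habs : ‖Ssum‖ = Real.sqrt n := by
      rw [← Real.sqrt_sq (norm_nonneg Ssum), habs2]
    have hfin : Real.sqrt n / (n:ℝ) = 1 / Real.sqrt n := by
      rw [div_eq_div_iff (ne_of_gt hn0) (ne_of_gt hsq), Real.mul_self_sqrt hn0.le, one_mul]
    rw [norm_div, habs, Complex.norm_natCast, hfin]


lemma bp_of_coherence {N : ℕ} {κ : Type*} [Fintype κ] [DecidableEq κ]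
    (A : Matrix (Fin N) κ ℂ) (μ : ℝ) (hμ0 : 0 ≤ μ)
    (hnorm : ∀ j, dotc (fun i => A i j) (fun i => A i j) = 1)
    (hcoh : ∀ j j', j ≠ j' → ‖dotc (fun i => A i j) (fun i => A i j')‖ ≤ μ)
    (x : κ → ℂ) (S : ℕ) (hx : (Function.support x).ncard ≤ S)
    (hSμ : 2 * (μ * S) < 1 + μ) : BPrecovers A x := by
  classical
  intro z hz hne
  set h : κ → ℂ := fun j => z j - x j with hh
  have hker : A.mulVec h = 0 := by
    have : h = z - x := rfl
    rw [this, Matrix.mulVec_sub, hz, sub_self]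
  set G : κ → κ → ℂ := fun m j => dotc (fun i => A i m) (fun i => A i j) with hG
  have horth : ∀ j, ∑ m, h m * G m j = 0 := by
    intro j
    have e1 : ∑ m, h m * G m j = ∑ i, (A.mulVec h i) * (starRingEnd ℂ) (A i j) := by
      calc ∑ m, h m * G m j = ∑ m, ∑ i, A i m * h m * (starRingEnd ℂ) (A i j) := by
            refine Finset.sum_congr rfl fun m _ => ?_
            show h m * dotc (fun i => A i m) (fun i => A i j) = _
            unfold dotc
            rw [Finset.mul_sum]
            exact Finset.sum_congr rfl fun i _ => by ring
        _ = ∑ i, ∑ m, A i m * h m * (starRingEnd ℂ) (A i j) := Finset.sum_comm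
        _ = ∑ i, (A.mulVec h i) * (starRingEnd ℂ) (A i j) := by
            refine Finset.sum_congr rfl fun i _ => ?_
            simp [Matrix.mulVec, dotProduct, Finset.sum_mul]
    rw [e1, hker]
    simp
  set T : ℝ := ∑ m, ‖h m‖ with hT
  have hTj : ∀ j, ‖h j‖ ≤ μ * (T - ‖h j‖) := by
    intro j
    have h1 : h j * G j j + ∑ m ∈ Finset.univ.erase j, h m * G m j = 0 := by
      rw [Finset.add_sum_erase Finset.univ (fun m => h m * G m j) (Finset.mem_univ j)]
      exact horth j
    have hGjj : G j j = 1 := hnorm j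
    have h2 : h j = -∑ m ∈ Finset.univ.erase j, h m * G m j := by
      rw [hGjj, mul_one] at h1; linear_combination h1
    calc ‖h j‖ = ‖∑ m ∈ Finset.univ.erase j, h m * G m j‖ := by
          rw [h2, norm_neg]
      _ ≤ ∑ m ∈ Finset.univ.erase j, ‖h m * G m j‖ :=
          norm_sum_le _ _
      _ ≤ ∑ m ∈ Finset.univ.erase j, ‖h m‖ * μ := by
          refine Finset.sum_le_sum fun m hm => ?_
          rw [norm_mul]
          exact mul_le_mul_of_nonneg_left (hcoh m j (Finset.ne_of_mem_erase hm))
            (norm_nonneg _)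
      _ = (T - ‖h j‖) * μ := by
          rw [← Finset.sum_mul, Finset.sum_erase_eq_sub (Finset.mem_univ j)]
      _ = μ * (T - ‖h j‖) := mul_comm _ _
  set Λ : Finset κ := Finset.filter (fun j => x j ≠ 0) Finset.univ with hΛ
  have hΛcard : (Λ.card : ℝ) ≤ S := by
    have hsupp : Function.support x = ↑Λ := by
      ext j; simp [hΛ, Function.mem_support]
    rw [hsupp, Set.ncard_coe_finset] at hx
    exact_mod_cast hx
  set a : ℝ := ∑ j ∈ Λ, ‖h j‖ with ha
  set b : ℝ := ∑ j ∈ Finset.univ.filter (fun j => ¬ x j ≠ 0), ‖h j‖ with hb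
  have hTab : T = a + b := by
    rw [hT, ha, hb, hΛ, Finset.sum_filter_add_sum_filter_not]
  have ha0 : 0 ≤ a := Finset.sum_nonneg fun j _ => norm_nonneg _
  have hb0 : 0 ≤ b := Finset.sum_nonneg fun j _ => norm_nonneg _
  have hT0 : 0 ≤ T := Finset.sum_nonneg fun j _ => norm_nonneg _
  have hs0 : 0 ≤ μ * S := mul_nonneg hμ0 (Nat.cast_nonneg S)
  have hsumΛ : (1 + μ) * a ≤ μ * S * T := by
    have e1 : ∀ j ∈ Λ, (1 + μ) * ‖h j‖ ≤ μ * T := by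
      intro j _
      have := hTj j
      nlinarith [this]
    calc (1 + μ) * a = ∑ j ∈ Λ, (1 + μ) * ‖h j‖ := by rw [Finset.mul_sum]
      _ ≤ ∑ _j ∈ Λ, μ * T := Finset.sum_le_sum e1
      _ = Λ.card * (μ * T) := by rw [Finset.sum_const, nsmul_eq_mul]
      _ ≤ S * (μ * T) := by
          refine mul_le_mul_of_nonneg_right hΛcard (mul_nonneg hμ0 hT0)
      _ = μ * S * T := by ring
  have hbpos : 0 < b := by
    rcases lt_or_eq_of_le hb0 with hbp | hbz
    · exact hbp
    exfalso
    have haz : a = 0 := by nlinarith [hsumΛ, hTab, hSμ, ha0, hs0]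
    have hTz : T = 0 := by rw [hTab, haz, ← hbz, add_zero]
    have : ∀ m ∈ Finset.univ, ‖h m‖ = 0 := by
      rw [hT] at hTz
      exact fun m hm => (Finset.sum_eq_zero_iff_of_nonneg
        (fun j _ => norm_nonneg _)).mp hTz m hm
    apply hne
    funext j
    have := this j (Finset.mem_univ j)
    have hj0 : h j = 0 := by rwa [norm_eq_zero] at this
    have hzx : z j - x j = 0 := hj0
    exact sub_eq_zero.mp hzx
  have hab : a < b := by nlinarith [hsumΛ, hTab, hSμ, ha0, hs0, hbpos]
  -- final chain
  have hxsplit : l1norm x = ∑ j ∈ Λ, ‖x j‖ := by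
    rw [l1norm, ← Finset.sum_filter_add_sum_filter_not Finset.univ (fun j => x j ≠ 0), ← hΛ]
    have : ∑ j ∈ Finset.univ.filter (fun j => ¬ x j ≠ 0), ‖x j‖ = 0 := by
      refine Finset.sum_eq_zero fun j hj => ?_
      have := Finset.mem_filter.mp hj
      simp only [not_not] at this
      rw [this.2, norm_zero]
    rw [this, add_zero]
  have hzsplit : l1norm z = ∑ j ∈ Λ, ‖z j‖ + b := by
    rw [l1norm, ← Finset.sum_filter_add_sum_filter_not Finset.univ (fun j => x j ≠ 0), ← hΛ]
    congr 1
    refine Finset.sum_congr rfl fun j hj => ?_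
    have := Finset.mem_filter.mp hj
    simp only [not_not] at this
    have : z j = h j := by rw [hh]; simp [this.2]
    rw [this]
  have hlow : ∑ j ∈ Λ, ‖x j‖ - a ≤ ∑ j ∈ Λ, ‖z j‖ := by
    rw [ha, ← Finset.sum_sub_distrib]
    refine Finset.sum_le_sum fun j _ => ?_
    have : ‖x j‖ ≤ ‖z j‖ + ‖h j‖ := by
      calc ‖x j‖ = ‖z j - h j‖ := by rw [hh]; congr 1; ring
        _ ≤ ‖z j‖ + ‖h j‖ := by
            simpa [sub_eq_add_neg] using norm_add_le (z j) (-(h j))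
    linarith
  rw [hzsplit, hxsplit]
  linarith


end AlltopAux
end

/-- Let `n ≥ 5` be prime and `g^A` the Alltop window with entries
`g^A_q = n^{-1/2} e^{2πi q³/n}`. If `S < (√n + 1)/2`, then Basis Pursuit recovers every
`S`-sparse `x ∈ ℂ^{n²}` from `y = Ψ_{g^A} x`. -/
theorem alltop_recovery (n : ℕ) (hp : n.Prime) (hn : 5 ≤ n) (S : ℕ)
    (hS : (S : ℝ) < (Real.sqrt n + 1) / 2)
    (gA : Fin n → ℂ)
    (hgA : ∀ q : Fin n, gA q = Complex.exp (2 * Real.pi * Complex.I * (q : ℕ) ^ 3 / n) / Real.sqrt n)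
    (x : Fin n × Fin n → ℂ) (hx : (Function.support x).ncard ≤ S) :
    BPrecovers (gaborMatrix n gA) x := by
  haveI : NeZero n := ⟨by omega⟩
  have hn0 : (0:ℝ) < n := by exact_mod_cast hp.pos
  have hsq : (0:ℝ) < Real.sqrt n := Real.sqrt_pos.mpr hn0
  have key : 2 * ((1 / Real.sqrt n) * (S:ℝ)) < 1 + 1 / Real.sqrt n := by
    rw [show 2 * ((1/Real.sqrt n) * (S:ℝ)) = (2*(S:ℝ)) / Real.sqrt n by ring,
        show (1:ℝ) + 1/Real.sqrt n = (Real.sqrt n + 1)/Real.sqrt n by field_simp]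
    exact (div_lt_div_iff_of_pos_right hsq).mpr (by linarith)
  exact AlltopAux.bp_of_coherence (gaborMatrix n gA) (1 / Real.sqrt n) (by positivity)
    (fun j => AlltopAux.coh_diag n hp gA hgA j)
    (fun j j' hjj => AlltopAux.coh_off n hp hn gA hgA hjj)
    x S hx key
end

section
/- Let ε_1,…,ε_d be independent random variables each uniformly distributed on the unit circle {z ∈ ℂ : |z| = 1} (a Steinhaus sequence), let a ∈ ℂ^d with a ≠ 0, let κ ∈ (0,1) and u ≥ 0. Then P( |Σ_{j=1}^d ε_j a_j| ≥ u ‖a‖₂ ) ≤ e^{−κ u²} / (1 − κ). -/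
open MeasureTheory Complex Matrix

section AuxSteinhaus
open MeasureTheory Complex Finset

instance : circleHaar.IsMulLeftInvariant := Measure.isMulLeftInvariant_haarMeasure _

lemma cont_integrable {X E : Type*} [TopologicalSpace X] [CompactSpace X] [MeasurableSpace X]
    [OpensMeasurableSpace X] [NormedAddCommGroup E] {μ : Measure X} [IsFiniteMeasure μ]
    {f : X → E} (hf : Continuous f) : Integrable f μ :=
  hf.integrable_of_hasCompactSupport (HasCompactSupport.of_compactSpace f)

lemma circle_zpow_int (n : ℤ) (hn : n ≠ 0) :
    ∫ z : Circle, (z : ℂ) ^ n ∂circleHaar = 0 := by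
  set c : Circle := Circle.exp (Real.pi / n) with hcdef
  have key : ∫ z : Circle, ((c * z : Circle) : ℂ) ^ n ∂circleHaar
      = ∫ z : Circle, (z : ℂ) ^ n ∂circleHaar :=
    integral_mul_left_eq_self (fun z : Circle => (z : ℂ) ^ n) c
  have hcn : (c : ℂ) ^ n = -1 := by
    rw [hcdef, Circle.coe_exp, ← Complex.exp_int_mul]
    have : (n : ℂ) * (↑(Real.pi / n) * Complex.I) = Real.pi * Complex.I := by
      have hn' : (n : ℂ) ≠ 0 := Int.cast_ne_zero.mpr hn
      push_cast
      field_simp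
    rw [this, Complex.exp_pi_mul_I]
  have heq : ∀ z : Circle, ((c * z : Circle) : ℂ) ^ n = -((z:ℂ)^n) := by
    intro z
    rw [Circle.coe_mul, mul_zpow, hcn]; ring
  rw [funext heq] at key
  rw [integral_neg] at key
  linear_combination (-(1:ℂ)/2) * key

lemma circle_pow_conj (k l : ℕ) :
    ∫ z : Circle, (z : ℂ) ^ k * (starRingEnd ℂ) (z : ℂ) ^ l ∂circleHaar
      = if k = l then 1 else 0 := by
  have hpt : ∀ z : Circle, (z : ℂ) ^ k * (starRingEnd ℂ) (z : ℂ) ^ l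
      = (z : ℂ) ^ ((k : ℤ) - (l : ℤ)) := by
    intro z
    rw [← Circle.coe_inv_eq_conj, Circle.coe_inv, ← zpow_natCast ((z:ℂ)) k, inv_pow,
      ← zpow_natCast ((z:ℂ)) l, ← _root_.zpow_neg, ← _root_.zpow_add₀ z.coe_ne_zero, sub_eq_add_neg]
  rw [funext hpt]
  by_cases h : k = l
  · subst h
    simp [zpow_zero]
  · rw [if_neg h, circle_zpow_int _ (by omega)]

lemma cont_conj : Continuous fun z : ℂ => (starRingEnd ℂ) z := Complex.continuous_conj
attribute [fun_prop] cont_conj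

lemma ofReal_integral' {X : Type*} [MeasurableSpace X] {μ : Measure X} (f : X → ℝ) :
    ((∫ x, f x ∂μ : ℝ) : ℂ) = ∫ x, ((f x : ℝ) : ℂ) ∂μ :=
  (integral_ofReal (𝕜 := ℂ)).symm

lemma abs_pow_eq (w : ℂ) (n : ℕ) : ((‖w‖ : ℝ) : ℂ) ^ (2 * n)
    = w ^ n * (starRingEnd ℂ) w ^ n := by
  rw [pow_mul, ← Complex.ofReal_pow, Complex.sq_norm, ← Complex.mul_conj, mul_pow]

lemma one_var (m : ℕ) (S c : ℂ) :
    ∫ z : Circle, (‖S + (z : ℂ) * c‖) ^ (2 * m) ∂circleHaar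
      = ∑ k ∈ Finset.range (m + 1),
          (m.choose k : ℝ) ^ 2 * ‖S‖ ^ (2 * k) * ‖c‖ ^ (2 * (m - k)) := by
  apply Complex.ofReal_injective
  rw [ofReal_integral']
  simp only [Complex.ofReal_pow]
  have hpt : (fun z : Circle => ((‖S + (z : ℂ) * c‖ : ℝ) : ℂ) ^ (2 * m))
      = fun z : Circle => ∑ k ∈ Finset.range (m + 1), ∑ l ∈ Finset.range (m + 1),
          ((z : ℂ) ^ (m - k) * (starRingEnd ℂ) (z : ℂ) ^ (m - l)) *
            ((S ^ k * c ^ (m - k) * (m.choose k : ℂ)) *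
              ((starRingEnd ℂ) S ^ l * (starRingEnd ℂ) c ^ (m - l) * (m.choose l : ℂ))) := by
    funext z
    rw [abs_pow_eq]
    simp only [map_add, _root_.map_mul]
    rw [add_pow, add_pow, Finset.sum_mul_sum]
    refine Finset.sum_congr rfl fun k _ => Finset.sum_congr rfl fun l _ => ?_
    rw [_root_.mul_pow, _root_.mul_pow]
    ring
  rw [hpt]
  rw [integral_finset_sum _ (fun k _ => cont_integrable (by fun_prop))]
  have hstep : ∀ k ∈ Finset.range (m + 1),
      (∫ z : Circle, ∑ l ∈ Finset.range (m + 1),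
          ((z : ℂ) ^ (m - k) * (starRingEnd ℂ) (z : ℂ) ^ (m - l)) *
            ((S ^ k * c ^ (m - k) * (m.choose k : ℂ)) *
              ((starRingEnd ℂ) S ^ l * (starRingEnd ℂ) c ^ (m - l) * (m.choose l : ℂ)))
          ∂circleHaar)
        = (S ^ k * c ^ (m - k) * (m.choose k : ℂ)) *
              ((starRingEnd ℂ) S ^ k * (starRingEnd ℂ) c ^ (m - k) * (m.choose k : ℂ)) := by
    intro k hk
    rw [integral_finset_sum _ (fun l _ => cont_integrable (by fun_prop))]
    have : ∀ l ∈ Finset.range (m + 1),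
        (∫ z : Circle, ((z : ℂ) ^ (m - k) * (starRingEnd ℂ) (z : ℂ) ^ (m - l)) *
            ((S ^ k * c ^ (m - k) * (m.choose k : ℂ)) *
              ((starRingEnd ℂ) S ^ l * (starRingEnd ℂ) c ^ (m - l) * (m.choose l : ℂ)))
            ∂circleHaar)
          = (if l = k then (1:ℂ) else 0) *
            ((S ^ k * c ^ (m - k) * (m.choose k : ℂ)) *
              ((starRingEnd ℂ) S ^ l * (starRingEnd ℂ) c ^ (m - l) * (m.choose l : ℂ))) := by
      intro l hl
      rw [integral_mul_const, circle_pow_conj]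
      congr 1
      have hk' : k ≤ m := by simpa using Nat.lt_succ_iff.mp (Finset.mem_range.mp hk)
      have hl' : l ≤ m := by simpa using Nat.lt_succ_iff.mp (Finset.mem_range.mp hl)
      have : (m - k = m - l) ↔ (l = k) := by omega
      simp [this]
    rw [Finset.sum_congr rfl this]
    simp only [ite_mul, zero_mul, one_mul]
    rw [Finset.sum_ite_eq' (Finset.range (m+1))]
    rw [if_pos hk]
  rw [Finset.sum_congr rfl hstep, Complex.ofReal_sum]
  refine Finset.sum_congr rfl fun k hk => ?_
  push_cast
  rw [abs_pow_eq S k, abs_pow_eq c (m - k)]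
  ring

lemma moment_bound : ∀ (d m : ℕ) (a : Fin d → ℂ),
    (∫ e : Fin d → Circle,
        (‖∑ j, ((e j : Circle) : ℂ) * a j‖) ^ (2 * m)
      ∂(Measure.pi fun _ : Fin d => circleHaar))
      ≤ (m.factorial : ℝ) * (∑ j, ‖a j‖ ^ 2) ^ m := by
  intro d
  induction d with
  | zero =>
    intro m a
    rcases Nat.eq_zero_or_pos m with hm | hm
    · subst hm; simp
    · have : 2 * m ≠ 0 := by omega
      simp only [Fin.sum_univ_zero, map_zero, norm_zero, zero_pow this, integral_zero]
      positivity
  | succ d IH =>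
    intro m a
    set μ := circleHaar
    set Q := (Measure.pi fun _ : Fin d => circleHaar)
    set P := (Measure.pi fun _ : Fin (d + 1) => circleHaar)
    set B := ∑ j : Fin d, ‖a j.succ‖ ^ 2 with hB
    have hB0 : 0 ≤ B := Finset.sum_nonneg fun j _ => by positivity
    set T := MeasurableEquiv.piFinSuccAbove (fun _ : Fin (d + 1) => Circle) 0
    have hT : MeasurePreserving T P (μ.prod Q) :=
      measurePreserving_piFinSuccAbove (fun _ : Fin (d + 1) => circleHaar) 0
    have hTs : MeasurePreserving T.symm (μ.prod Q) P := hT.symm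
    have key : (∫ e : Fin (d+1) → Circle,
        (‖∑ j, ((e j : Circle) : ℂ) * a j‖) ^ (2 * m) ∂P)
        = ∫ x : Circle × (Fin d → Circle),
            (‖(∑ j : Fin d, ((x.2 j : Circle) : ℂ) * a j.succ)
              + (x.1 : ℂ) * a 0‖) ^ (2 * m) ∂(μ.prod Q) := by
      rw [← hTs.integral_comp T.symm.measurableEmbedding]
      congr 1
      funext x
      congr 2
      have h0 : (T.symm x) 0 = x.1 := by
        simp [T, MeasurableEquiv.piFinSuccAbove_symm_apply]
      have hs : ∀ j : Fin d, (T.symm x) j.succ = x.2 j := by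
        intro j
        simp [T, MeasurableEquiv.piFinSuccAbove_symm_apply]
      rw [Fin.sum_univ_succ, h0]
      rw [Finset.sum_congr rfl fun j _ => by rw [hs j]]
      ring
    rw [key]
    have hint : Integrable (fun x : Circle × (Fin d → Circle) =>
        (‖(∑ j : Fin d, ((x.2 j : Circle) : ℂ) * a j.succ)
          + (x.1 : ℂ) * a 0‖) ^ (2 * m)) (μ.prod Q) := by
      apply cont_integrable
      apply Continuous.pow
      apply continuous_norm.comp
      apply Continuous.add
      · exact continuous_finset_sum _ fun j _ =>
          (continuous_subtype_val.comp ((continuous_apply j).comp continuous_snd)).mul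
            continuous_const
      · exact (continuous_subtype_val.comp continuous_fst).mul continuous_const
    rw [integral_prod_symm _ hint]
    -- inner integral via one_var
    have hinner : ∀ e' : Fin d → Circle,
        (∫ z : Circle, (‖(∑ j : Fin d, ((e' j : Circle) : ℂ) * a j.succ)
          + (z : ℂ) * a 0‖) ^ (2 * m) ∂μ)
        = ∑ k ∈ Finset.range (m + 1), (m.choose k : ℝ) ^ 2 *
            ‖∑ j : Fin d, ((e' j : Circle) : ℂ) * a j.succ‖ ^ (2 * k) *
            ‖a 0‖ ^ (2 * (m - k)) := fun e' => one_var m _ (a 0)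
    rw [integral_congr_ae (Filter.Eventually.of_forall hinner)]
    rw [integral_finset_sum _ (fun k _ => by
      apply Integrable.mul_const
      apply Integrable.const_mul
      apply cont_integrable
      exact (continuous_norm.comp (continuous_finset_sum _ fun j _ =>
        (continuous_subtype_val.comp (continuous_apply j)).mul continuous_const)).pow _)]
    simp only [integral_mul_const, integral_const_mul]
    -- bound each term
    have hsum : ∑ j : Fin (d+1), ‖a j‖ ^ 2 = ‖a 0‖ ^ 2 + B := by
      rw [Fin.sum_univ_succ, hB]
    rw [hsum, add_comm (‖a 0‖ ^ 2) B, add_pow]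
    rw [Finset.mul_sum]
    apply Finset.sum_le_sum
    intro k hk
    have hk' : k ≤ m := Nat.lt_succ_iff.mp (Finset.mem_range.mp hk)
    have hIH := IH k (fun j => a j.succ)
    have hCfac : (m.choose k : ℝ) * (k.factorial : ℝ) ≤ (m.factorial : ℝ) := by
      have h := Nat.choose_mul_factorial_mul_factorial hk'
      have h2 : m.choose k * k.factorial ≤ m.factorial := by
        calc m.choose k * k.factorial ≤ m.choose k * k.factorial * (m-k).factorial :=
          Nat.le_mul_of_pos_right _ (Nat.factorial_pos _)
        _ = m.factorial := h
      exact_mod_cast h2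
    calc (m.choose k : ℝ) ^ 2 *
          (∫ e' : Fin d → Circle, ‖∑ j : Fin d, ((e' j : Circle) : ℂ) * a j.succ‖
            ^ (2 * k) ∂Q) * ‖a 0‖ ^ (2 * (m - k))
        ≤ (m.choose k : ℝ) ^ 2 * ((k.factorial : ℝ) * B ^ k) * ‖a 0‖ ^ (2 * (m - k)) := by
          apply mul_le_mul_of_nonneg_right _ (by positivity)
          exact mul_le_mul_of_nonneg_left hIH (by positivity)
      _ ≤ (m.factorial : ℝ) * ((m.choose k : ℝ) * B ^ k * (‖a 0‖ ^ 2) ^ (m - k)) := by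
          rw [pow_mul (‖a 0‖) 2]
          have : (m.choose k : ℝ) ^ 2 * ((k.factorial : ℝ) * B ^ k)
              = ((m.choose k : ℝ) * (k.factorial : ℝ)) * ((m.choose k : ℝ) * B ^ k) := by ring
          rw [this]
          have hbound : ((m.choose k : ℝ) * (k.factorial : ℝ)) * ((m.choose k : ℝ) * B ^ k)
              ≤ (m.factorial : ℝ) * ((m.choose k : ℝ) * B ^ k) :=
            mul_le_mul_of_nonneg_right hCfac (by positivity)
          calc ((m.choose k : ℝ) * (k.factorial : ℝ)) * ((m.choose k : ℝ) * B ^ k)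
              * ((‖a 0‖ ^ 2) ^ (m - k))
              ≤ (m.factorial : ℝ) * ((m.choose k : ℝ) * B ^ k) * ((‖a 0‖ ^ 2) ^ (m - k)) :=
                mul_le_mul_of_nonneg_right hbound (by positivity)
            _ = (m.factorial : ℝ) * ((m.choose k : ℝ) * B ^ k * (‖a 0‖ ^ 2) ^ (m - k)) := by
                ring
      _ = (m.factorial : ℝ) * (B ^ k * (‖a 0‖ ^ 2) ^ (m - k) * (m.choose k : ℝ)) := by
          ring


lemma exp_moment_bound {X : Type*} [MeasurableSpace X] (P : Measure X)
    (f : X → ℝ) (hfm : Measurable f)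
    (hfi : ∀ n : ℕ, Integrable (fun e => f e ^ (2 * n)) P)
    (A2 κ : ℝ) (hA2 : 0 < A2) (hκ0 : 0 < κ) (hκ1 : κ < 1)
    (hmom : ∀ n : ℕ, (∫ e, f e ^ (2 * n) ∂P) ≤ (n.factorial : ℝ) * A2 ^ n) :
    ∫⁻ e, ENNReal.ofReal (Real.exp (κ * f e ^ 2 / A2)) ∂P
      ≤ ENNReal.ofReal ((1 - κ)⁻¹) := by
  have hser : ∀ t : ℝ, 0 ≤ t → ENNReal.ofReal (Real.exp t)
      = ∑' n : ℕ, ENNReal.ofReal (t ^ n / n.factorial) := by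
    intro t ht
    have h1 : Real.exp t = ∑' n : ℕ, t ^ n / n.factorial := by
      rw [Real.exp_eq_exp_ℝ, NormedSpace.exp_eq_tsum ℝ]
      simp [smul_eq_mul, div_eq_inv_mul]
    rw [h1, ENNReal.ofReal_tsum_of_nonneg (fun n => by positivity)
      (Real.summable_pow_div_factorial t)]
  have hxm : Measurable fun e => κ * f e ^ 2 / A2 := ((hfm.pow_const 2).const_mul κ).div_const A2
  calc ∫⁻ e, ENNReal.ofReal (Real.exp (κ * f e ^ 2 / A2)) ∂P
      = ∑' n : ℕ, ∫⁻ e, ENNReal.ofReal ((κ * f e ^ 2 / A2) ^ n / n.factorial) ∂P := by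
        rw [lintegral_congr fun e => hser _ (by positivity)]
        exact lintegral_tsum (fun n => (ENNReal.measurable_ofReal.comp
          ((hxm.pow_const n).div_const _)).aemeasurable)
    _ ≤ ∑' n : ℕ, ENNReal.ofReal (κ ^ n) := by
        apply ENNReal.tsum_le_tsum
        intro n
        have hxrw : ∀ e, (κ * f e ^ 2 / A2) ^ n / n.factorial
            = (κ ^ n / A2 ^ n / n.factorial) * f e ^ (2 * n) := by
          intro e
          rw [div_pow, mul_pow, ← pow_mul]
          ring
        have hint : Integrable (fun e => (κ * f e ^ 2 / A2) ^ n / n.factorial) P := by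
          simp only [hxrw]
          exact (hfi n).const_mul _
        rw [← ofReal_integral_eq_lintegral_ofReal hint
          (Filter.Eventually.of_forall fun e => by positivity)]
        apply ENNReal.ofReal_le_ofReal
        rw [integral_congr_ae (Filter.Eventually.of_forall fun e => hxrw e)]
        rw [integral_const_mul]
        calc κ ^ n / A2 ^ n / n.factorial * ∫ e, f e ^ (2 * n) ∂P
            ≤ κ ^ n / A2 ^ n / n.factorial * ((n.factorial : ℝ) * A2 ^ n) := by
              apply mul_le_mul_of_nonneg_left (hmom n) (by positivity)
          _ = κ ^ n := by field_simp
    _ = ENNReal.ofReal ((1 - κ)⁻¹) := by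
        rw [← ENNReal.ofReal_tsum_of_nonneg (fun n => by positivity)
          (summable_geometric_of_lt_one hκ0.le hκ1)]
        rw [tsum_geometric_of_lt_one hκ0.le hκ1]


end AuxSteinhaus

/-- (Bernstein-type inequality for Steinhaus sequences.) For independent
Haar-uniform `ε_1, …, ε_d` on the unit circle, `a ∈ ℂ^d`, `a ≠ 0`, `κ ∈ (0,1)` and `u ≥ 0`:
`P(|∑_j ε_j a_j| ≥ u ‖a‖₂) ≤ e^{−κu²}/(1−κ)`. -/
theorem steinhaus_bernstein (d : ℕ) (a : Fin d → ℂ) (ha : a ≠ 0)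
    (κ u : ℝ) (hκ : κ ∈ Set.Ioo (0 : ℝ) 1) (hu : 0 ≤ u) :
    (Measure.pi fun _ : Fin d => circleHaar)
        {e | u * l2norm a ≤ ‖∑ j, ((e j : Circle) : ℂ) * a j‖}
      ≤ ENNReal.ofReal (Real.exp (-κ * u ^ 2) / (1 - κ)) := by
  obtain ⟨hκ0, hκ1⟩ := hκ
  set P := (Measure.pi fun _ : Fin d => circleHaar) with hP
  set f : (Fin d → Circle) → ℝ := fun e => ‖∑ j, ((e j : Circle) : ℂ) * a j‖
    with hf
  have hfc : Continuous f := continuous_norm.comp (continuous_finset_sum _ fun j _ =>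
    (continuous_subtype_val.comp (continuous_apply j)).mul continuous_const)
  have hfnn : ∀ e, 0 ≤ f e := fun e => norm_nonneg _
  set A2 := ∑ j, ‖a j‖ ^ 2 with hA2
  have hA2pos : 0 < A2 := by
    have hex : ∃ j, a j ≠ 0 := by
      by_contra h
      push_neg at h
      exact ha (funext h)
    obtain ⟨j, hj⟩ := hex
    exact Finset.sum_pos' (fun i _ => sq_nonneg _)
      ⟨j, Finset.mem_univ j, pow_pos (norm_pos_iff.mpr hj) 2⟩
  have hA : l2norm a ^ 2 = A2 := Real.sq_sqrt hA2pos.le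
  have hAnn : 0 ≤ l2norm a := Real.sqrt_nonneg _
  have hexp : ∫⁻ e, ENNReal.ofReal (Real.exp (κ * f e ^ 2 / A2)) ∂P
      ≤ ENNReal.ofReal ((1 - κ)⁻¹) :=
    exp_moment_bound P f hfc.measurable
      (fun n => cont_integrable (hfc.pow _)) A2 κ hA2pos hκ0 hκ1
      (fun n => moment_bound d n a)
  set ε : ENNReal := ENNReal.ofReal (Real.exp (κ * u ^ 2)) with hε
  have hεpos : ε ≠ 0 := by
    simp [hε, ENNReal.ofReal_eq_zero, not_le, Real.exp_pos]
  have hεtop : ε ≠ ⊤ := ENNReal.ofReal_ne_top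
  have hsub : {e | u * l2norm a ≤ f e}
      ⊆ {e | ε ≤ ENNReal.ofReal (Real.exp (κ * f e ^ 2 / A2))} := by
    intro e he
    simp only [Set.mem_setOf_eq] at he ⊢
    apply ENNReal.ofReal_le_ofReal
    apply Real.exp_le_exp.mpr
    rw [le_div_iff₀ hA2pos]
    have h1 : (u * l2norm a) ^ 2 ≤ f e ^ 2 :=
      pow_le_pow_left₀ (mul_nonneg hu hAnn) he 2
    have h2 : u ^ 2 * A2 ≤ f e ^ 2 := by
      calc u ^ 2 * A2 = (u * l2norm a) ^ 2 := by rw [mul_pow, hA]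
        _ ≤ f e ^ 2 := h1
    nlinarith [hκ0.le]
  have hmarkov : ε * P {e | u * l2norm a ≤ f e}
      ≤ ∫⁻ e, ENNReal.ofReal (Real.exp (κ * f e ^ 2 / A2)) ∂P := by
    calc ε * P {e | u * l2norm a ≤ f e}
        ≤ ε * P {e | ε ≤ ENNReal.ofReal (Real.exp (κ * f e ^ 2 / A2))} :=
          mul_le_mul_right (measure_mono hsub) ε
      _ ≤ _ := mul_meas_ge_le_lintegral₀ ((ENNReal.measurable_ofReal.comp
            (Real.continuous_exp.measurable.comp
              ((continuous_const.mul (hfc.pow 2)).div_const A2).measurable)).aemeasurable) ε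
  have hfin : P {e | u * l2norm a ≤ f e} ≤ ENNReal.ofReal ((1 - κ)⁻¹) / ε := by
    rw [ENNReal.le_div_iff_mul_le (Or.inl hεpos) (Or.inl hεtop)]
    calc P _ * ε = ε * P _ := mul_comm _ _
      _ ≤ _ := le_trans hmarkov hexp
  refine le_trans hfin (le_of_eq ?_)
  rw [hε, ← ENNReal.ofReal_div_of_pos (Real.exp_pos _)]
  congr 1
  rw [neg_mul, Real.exp_neg]
  have h1κ : (1:ℝ) - κ ≠ 0 := by linarith
  have hex : Real.exp (κ * u ^ 2) ≠ 0 := (Real.exp_pos _).ne'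
  field_simp
end
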